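/- The Hare system does not prevent social disappointment: there exists a preference profile (for example, for 3 alternatives a, b, c and 10 voters, where 4 voters have list (a, b, c), 3 voters have (c, b, a) and 3 voters have (b, c, a)) in which some alternative that is a Hare winner is ranked last by at least half of the voters. -/

import Mathlib

open Finset

attribute [local instance] Classical.propDecidable

noncomputable section

/-- A preference profile for `n` voters: each voter has a ballot, a list of
alternatives ordered from most preferred (head) to least preferred (last). -/
abbrev Profile (n : ℕ) (A : Type*) := Fin n → List A

variable {A : Type*} [DecidableEq A]

/-- A valid profile: every ballot is a strict linear order on the alternatives,
i.e. a duplicate-free list containing every alternative. -/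
def IsProfile {n : ℕ} (P : Profile n A) : Prop :=
  ∀ i, (P i).Nodup ∧ ∀ a : A, a ∈ P i

/-- The voter with ballot `l` prefers `x` to `y`. -/
def Prefers (l : List A) (x y : A) : Prop := l.idxOf x < l.idxOf y

/-- The number of voters who rank `a` last (at the bottom of their list). -/
def lastCount {n : ℕ} (P : Profile n A) (a : A) : ℕ :=
  (univ.filter fun i => (P i).getLast? = some a).card

/-- The number of voters who rank `a` first (at the top of their list). -/
def firstCount {n : ℕ} (P : Profile n A) (a : A) : ℕ :=
  (univ.filter fun i => (P i).head? = some a).card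

/-- The number of voters preferring `x` to `y`. -/
def prefCount {n : ℕ} (P : Profile n A) (x y : A) : ℕ :=
  (univ.filter fun i => Prefers (P i) x y).card

/-- `x` defeats `y` in a pairwise majority contest: strictly more voters
prefer `x` to `y` than prefer `y` to `x`. -/
def Defeats {n : ℕ} (P : Profile n A) (x y : A) : Prop :=
  prefCount P y x < prefCount P x y

/-- Condorcet's method: the winners are the alternatives defeated by no other alternative. -/
def CondorcetWinners {n : ℕ} (P : Profile n A) : Set A :=
  {a | ∀ b, ¬ Defeats P b a}

/-- `a` is a Condorcet winner: it is the unique winner of Condorcet's method. -/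
def IsCondorcetWinner {n : ℕ} (P : Profile n A) (a : A) : Prop :=
  CondorcetWinners P = {a}

/-- The top alternative of ballot `l` among the still-remaining alternatives `S`. -/
def topAmong (S : Finset A) (l : List A) : Option A :=
  (l.filter fun x => decide (x ∈ S)).head?

/-- The number of voters ranking `a` first among the remaining alternatives `S`. -/
def hFirstCount {n : ℕ} (P : Profile n A) (S : Finset A) (a : A) : ℕ :=
  (univ.filter fun i => topAmong S (P i) = some a).card

/-- One round of the Hare system: delete from `S` the alternative(s) with the
fewest first-place rankings, i.e. keep those that are not minimal. -/
def hareStep {n : ℕ} (P : Profile n A) (S : Finset A) : Finset A :=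
  S.filter fun a => ∃ b ∈ S, hFirstCount P S b < hFirstCount P S a

/-- Iterating the Hare rounds; once a round would delete every remaining
alternative, the process stops (those alternatives are the ones deleted last). -/
def hareIter {n : ℕ} [Fintype A] (P : Profile n A) : ℕ → Finset A
  | 0 => Finset.univ
  | k + 1 =>
      let S := hareIter P k
      if hareStep P S = ∅ then S else hareStep P S

/-- Hare system winners: the alternative(s) remaining at the last stage. -/
def HareWinners {n : ℕ} [Fintype A] (P : Profile n A) : Finset A :=
  hareIter P (Fintype.card A)

/-- The example profile: 4 voters (a,b,c), 3 voters (c,b,a), 3 voters (b,c,a). -/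
def Pex : Profile 10 (Fin 3) := fun i =>
  if i.val < 4 then [0, 1, 2] else if i.val < 7 then [2, 1, 0] else [1, 2, 0]

lemma cfe {p : Fin 10 → Prop} [DecidablePred p] (s : Finset (Fin 10))
    (h : ∀ i, p i ↔ i ∈ s) (k : ℕ) (hk : s.card = k) :
    (univ.filter p).card = k := by
  rw [← hk]; congr 1; ext i; simp [h i]

lemma c0 : hFirstCount Pex univ 0 = 4 :=
  cfe {0, 1, 2, 3} (by intro i; fin_cases i <;> decide) 4 rfl

lemma c1 : hFirstCount Pex univ 1 = 3 :=
  cfe {7, 8, 9} (by intro i; fin_cases i <;> decide) 3 rfl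

lemma c2 : hFirstCount Pex univ 2 = 3 :=
  cfe {4, 5, 6} (by intro i; fin_cases i <;> decide) 3 rfl

lemma fin3 (b : Fin 3) : b = 0 ∨ b = 1 ∨ b = 2 := by fin_cases b <;> simp

lemma hstep1 : hareStep Pex univ = {0} := by
  ext a
  simp only [hareStep, Finset.mem_filter, Finset.mem_univ, true_and,
    Finset.mem_singleton]
  constructor
  · rintro ⟨b, hb⟩
    rcases fin3 a with rfl | rfl | rfl
    · rfl
    all_goals (exfalso; rcases fin3 b with rfl | rfl | rfl <;>
      simp only [c0, c1, c2] at hb <;> omega)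
  · rintro rfl
    exact ⟨1, by rw [c0, c1]; omega⟩

lemma hstep2 : hareStep Pex ({0} : Finset (Fin 3)) = ∅ := by
  ext a
  simp only [hareStep, Finset.mem_filter, Finset.mem_singleton,
    Finset.notMem_empty, iff_false, not_and]
  rintro rfl ⟨b, rfl, hlt⟩
  exact lt_irrefl _ hlt

lemma hW : HareWinners Pex = {0} := by
  have i1 : hareIter Pex 1 = {0} := by
    show (if hareStep Pex (hareIter Pex 0) = ∅ then hareIter Pex 0
      else hareStep Pex (hareIter Pex 0)) = {0}
    have h0 : hareIter Pex 0 = univ := rfl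
    rw [h0, hstep1]
    rw [if_neg (by decide)]
  have i2 : hareIter Pex 2 = {0} := by
    show (if hareStep Pex (hareIter Pex 1) = ∅ then hareIter Pex 1
      else hareStep Pex (hareIter Pex 1)) = {0}
    rw [i1, hstep2, if_pos rfl]
  have i3 : hareIter Pex 3 = {0} := by
    show (if hareStep Pex (hareIter Pex 2) = ∅ then hareIter Pex 2
      else hareStep Pex (hareIter Pex 2)) = {0}
    rw [i2, hstep2, if_pos rfl]
  show hareIter Pex (Fintype.card (Fin 3)) = {0}
  rw [Fintype.card_fin]
  exact i3

lemma hlast : lastCount Pex 0 = 6 :=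
  cfe {4, 5, 6, 7, 8, 9} (by intro i; fin_cases i <;> decide) 6 rfl

/-- The Hare system does not prevent social disappointment:
there is a profile (3 alternatives, 10 voters) in which some Hare winner
is ranked last by at least half of the voters. -/
theorem hare_not_nonSD :
    ∃ P : Profile 10 (Fin 3), IsProfile P ∧
      ∃ a ∈ HareWinners P, 10 ≤ 2 * lastCount P a := by
  refine ⟨Pex, ?_, 0, ?_, ?_⟩
  · intro i; fin_cases i <;> exact ⟨by decide, by decide⟩
  · rw [hW]; exact Finset.mem_singleton_self 0
  · rw [hlast]; omega
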